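/- arXiv:quant-ph/0701202 — 2 statements merged into one kernel-verified Lean document; each statement's English description precedes it below -/
import Mathlib

section
/- With H_0 = (π/N)·σ for σ a diagonal Pauli matrix of Pauli weight at least 3, and F_q the weighted Pauli metric, the minimum over all J ∈ 𝒥 (integer multiples of 2π on the diagonal) of F_q(H_0 − J) is at least (π/N)·q. In particular, taking q exponentially large in n yields a unitary U = e^{−iH_0} whose shortest constant geodesic under F_q has length at least (π/N)·q. -/
open Finset

/-- Bitwise inner product (number of positions where both bits are 1). -/
def bip {n : ℕ} (i j : Fin n → Bool) : ℕ :=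
  (Finset.univ.filter fun k => i k && j k).card

/-- Pauli weight: number of Z factors. -/
def pw {n : ℕ} (j : Fin n → Bool) : ℕ :=
  (Finset.univ.filter fun k => j k = true).card

/-- Pauli expansion coefficient of the diagonal matrix with diagonal `h`. -/
noncomputable def lam {n : ℕ} (h : (Fin n → Bool) → ℝ) (j : Fin n → Bool) : ℝ :=
  (1 / (2 ^ n : ℝ)) * ∑ i, h i * (-1 : ℝ) ^ bip i j

/-- The 2×2 Pauli Z matrix. -/
def Zmat : Matrix Bool Bool ℝ :=
  Matrix.diagonal fun a => if a then -1 else 1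

/-- Tensor product of 2×2 matrices, indexed by bit strings. -/
def tensorProd {n : ℕ} (A : Fin n → Matrix Bool Bool ℝ) :
    Matrix (Fin n → Bool) (Fin n → Bool) ℝ :=
  fun i i' => ∏ k, A k (i k) (i' k)

/-- The diagonal Pauli matrix σ_j : tensor product of I's and Z's. -/
def sigma {n : ℕ} (j : Fin n → Bool) : Matrix (Fin n → Bool) (Fin n → Bool) ℝ :=
  tensorProd fun k => if j k then Zmat else 1

/-- The weighted Pauli metric F_q on diagonal Hermitians given by their diagonal. -/
noncomputable def Fq {n : ℕ} (q : ℝ) (h : (Fin n → Bool) → ℝ) : ℝ :=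
  Real.sqrt ((∑ j ∈ Finset.univ.filter fun j => pw j ≤ 2, (lam h j) ^ 2)
    + q ^ 2 * ∑ j ∈ Finset.univ.filter fun j => 3 ≤ pw j, (lam h j) ^ 2)

/-- with H₀ = (π/N)·σ_{j*} for a diagonal Pauli matrix σ_{j*} of
Pauli weight ≥ 3, every constant geodesic Hamiltonian H₀ − J (J in the integer
lattice 𝒥) satisfies F_q(H₀ − J) ≥ (π/N)·q, so the shortest constant geodesic
from I to U = e^{−iH₀} has length at least (π/N)·q. -/
theorem stmt3 {n : ℕ} (q : ℝ) (hq : 0 ≤ q) (jstar : Fin n → Bool)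
    (hw : 3 ≤ pw jstar) (jv : (Fin n → Bool) → ℤ) :
    (π / (2 ^ n : ℝ)) * q ≤
      Fq q (fun i => (π / (2 ^ n : ℝ)) * (-1 : ℝ) ^ bip i jstar
        - 2 * π * (jv i : ℝ)) := by
  have hN : (0:ℝ) < 2 ^ n := by positivity
  set h : (Fin n → Bool) → ℝ := fun i =>
    (π / (2 ^ n : ℝ)) * (-1 : ℝ) ^ bip i jstar - 2 * π * (jv i : ℝ) with hh
  set S : ℤ := ∑ i : Fin n → Bool, jv i * (-1:ℤ) ^ (bip i jstar) with hSdef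
  have hcard : (Fintype.card (Fin n → Bool) : ℝ) = 2 ^ n := by
    simp [Fintype.card_fun]
  have hlam : lam h jstar = π * (1 - 2 * (S:ℝ)) / 2 ^ n := by
    unfold lam
    have hterm : ∀ i : Fin n → Bool, h i * (-1:ℝ) ^ bip i jstar
        = π / 2 ^ n - 2 * π * ((jv i * (-1:ℤ) ^ (bip i jstar) : ℤ) : ℝ) := by
      intro i
      have hsq : ((-1:ℝ) ^ (bip i jstar)) * ((-1:ℝ) ^ (bip i jstar)) = 1 := by
        rw [← pow_add, ← two_mul, pow_mul]; norm_num
      simp only [hh]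
      push_cast
      calc (π / 2 ^ n * (-1:ℝ) ^ bip i jstar - 2 * π * (jv i : ℝ)) * (-1:ℝ) ^ bip i jstar
          = π / 2 ^ n * (((-1:ℝ) ^ bip i jstar) * ((-1:ℝ) ^ bip i jstar))
            - 2 * π * ((jv i : ℝ) * (-1:ℝ) ^ bip i jstar) := by ring
        _ = π / 2 ^ n - 2 * π * ((jv i : ℝ) * (-1:ℝ) ^ bip i jstar) := by rw [hsq]; ring
    have hScast : ((S:ℤ):ℝ) = ∑ x : Fin n → Bool, (jv x : ℝ) * (-1:ℝ) ^ bip x jstar := by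
      rw [hSdef]; push_cast; ring
    rw [Finset.sum_congr rfl fun i _ => hterm i, Finset.sum_sub_distrib,
      Finset.sum_const, ← Finset.mul_sum]
    push_cast
    rw [Finset.card_univ, nsmul_eq_mul, hcard, hScast]
    field_simp
  have hodd : (1 - 2 * S) ≠ 0 := by omega
  have hge1 : (1:ℤ) ≤ (1 - 2 * S) ^ 2 := by nlinarith [sq_nonneg (1 - 2 * S), Int.one_le_abs hodd, sq_abs (1 - 2 * S)]
  have hge1R : (1:ℝ) ≤ ((1:ℝ) - 2 * (S:ℝ)) ^ 2 := by exact_mod_cast hge1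
  have hlamsq : (π / 2 ^ n) ^ 2 ≤ (lam h jstar) ^ 2 := by
    rw [hlam]
    rw [div_pow, div_pow, mul_pow]
    apply div_le_div_of_nonneg_right _ (by positivity)
    nlinarith [mul_le_mul_of_nonneg_left hge1R (sq_nonneg π)]
  have hmem : jstar ∈ Finset.univ.filter fun j => 3 ≤ pw j := by
    simp [hw]
  have hB : (lam h jstar) ^ 2 ≤
      ∑ j ∈ Finset.univ.filter fun j => 3 ≤ pw j, (lam h j) ^ 2 :=
    Finset.single_le_sum (f := fun j => (lam h j) ^ 2) (fun j _ => sq_nonneg _) hmem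
  have hA : (0:ℝ) ≤ ∑ j ∈ Finset.univ.filter fun j => pw j ≤ 2, (lam h j) ^ 2 :=
    Finset.sum_nonneg fun j _ => sq_nonneg _
  unfold Fq
  have key : (π / (2 ^ n : ℝ) * q) ^ 2 ≤
      (∑ j ∈ Finset.univ.filter fun j => pw j ≤ 2, (lam h j) ^ 2)
        + q ^ 2 * ∑ j ∈ Finset.univ.filter fun j => 3 ≤ pw j, (lam h j) ^ 2 := by
    have h1 : (π / (2 ^ n : ℝ) * q) ^ 2 = (π / 2 ^ n) ^ 2 * q ^ 2 := by ring
    nlinarith [sq_nonneg q, mul_le_mul_of_nonneg_left hB (sq_nonneg q),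
      mul_le_mul_of_nonneg_right hlamsq (sq_nonneg q)]
  calc π / (2 ^ n : ℝ) * q ≤ |π / (2 ^ n : ℝ) * q| := le_abs_self _
    _ = Real.sqrt ((π / (2 ^ n : ℝ) * q) ^ 2) := (Real.sqrt_sq_eq_abs _).symm
    _ ≤ _ := Real.sqrt_le_sqrt key
end

section
/- Let σ be a diagonal Pauli matrix of Pauli weight ≥ 3 on n qubits and H_0 = (π/N)σ with N = 2^n. Then for every J ∈ 𝒥, F_q(H_0 − J) ≥ q·|λ^{H_0−J}_{j*}|, where j* is the index of σ; combined with the lattice bound this gives F_q(H_0 − J) ≥ qπ/N. -/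
open Finset

/-- for σ = σ_{j*} of Pauli weight ≥ 3 and H₀ = (π/N)σ, for every
J in the lattice 𝒥, F_q(H₀ − J) ≥ q·|λ^{H₀−J}_{j*}|, and combined with the
lattice bound F_q(H₀ − J) ≥ qπ/N. -/
theorem stmt8 {n : ℕ} (q : ℝ) (hq : 0 ≤ q) (jstar : Fin n → Bool)
    (hw : 3 ≤ pw jstar) (jv : (Fin n → Bool) → ℤ) :
    q * |lam (fun i => (π / (2 ^ n : ℝ)) * (-1 : ℝ) ^ bip i jstar
          - 2 * π * (jv i : ℝ)) jstar| ≤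
      Fq q (fun i => (π / (2 ^ n : ℝ)) * (-1 : ℝ) ^ bip i jstar
          - 2 * π * (jv i : ℝ)) ∧
    q * π / (2 ^ n : ℝ) ≤
      Fq q (fun i => (π / (2 ^ n : ℝ)) * (-1 : ℝ) ^ bip i jstar
          - 2 * π * (jv i : ℝ)) := by
  set h : (Fin n → Bool) → ℝ := fun i => (π / (2 ^ n : ℝ)) * (-1 : ℝ) ^ bip i jstar
          - 2 * π * (jv i : ℝ) with hh
  have hN : (0:ℝ) < 2 ^ n := by positivity
  -- compute lam h jstar
  set m : ℤ := ∑ i : Fin n → Bool, jv i * (-1 : ℤ) ^ bip i jstar with hm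
  have hsq : ∀ i : Fin n → Bool, (-1 : ℝ) ^ bip i jstar * (-1 : ℝ) ^ bip i jstar = 1 := by
    intro i
    rw [← pow_add]
    exact Even.neg_one_pow ⟨bip i jstar, rfl⟩
  have hcard : (Finset.univ : Finset (Fin n → Bool)).card = 2 ^ n := by
    simp [Finset.card_univ]
  have hlam : lam h jstar = (π / (2 ^ n : ℝ)) * (1 - 2 * (m : ℝ)) := by
    rw [lam]
    have : ∑ i : Fin n → Bool, h i * (-1 : ℝ) ^ bip i jstar
        = ∑ i : Fin n → Bool, (π / (2 ^ n : ℝ)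
            - 2 * π * ((jv i : ℝ) * (-1 : ℝ) ^ bip i jstar)) := by
      refine Finset.sum_congr rfl fun i _ => ?_
      calc h i * (-1 : ℝ) ^ bip i jstar
          = (π / (2 ^ n : ℝ)) * ((-1 : ℝ) ^ bip i jstar * (-1 : ℝ) ^ bip i jstar)
            - 2 * π * ((jv i : ℝ) * (-1 : ℝ) ^ bip i jstar) := by
            simp only [hh]; ring
        _ = π / (2 ^ n : ℝ) - 2 * π * ((jv i : ℝ) * (-1 : ℝ) ^ bip i jstar) := by
            rw [hsq i]; ring
    rw [this, Finset.sum_sub_distrib, Finset.sum_const, hcard, ← Finset.mul_sum]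
    have hmr : (m : ℝ) = ∑ i : Fin n → Bool, (jv i : ℝ) * (-1 : ℝ) ^ bip i jstar := by
      rw [hm]
      push_cast
      rfl
    rw [← hmr]
    field_simp
    ring_nf
    simp [inv_pow]
  -- first inequality
  have habs : q * |lam h jstar| = Real.sqrt (q ^ 2 * (lam h jstar) ^ 2) := by
    rw [← mul_pow, Real.sqrt_sq_eq_abs, abs_mul, abs_of_nonneg hq]
  have hmem : jstar ∈ Finset.univ.filter fun j => 3 ≤ pw j := by
    simp [hw]
  have hle2 : (lam h jstar) ^ 2
      ≤ ∑ j ∈ Finset.univ.filter fun j => 3 ≤ pw j, (lam h j) ^ 2 :=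
    Finset.single_le_sum (f := fun j => (lam h j) ^ 2) (fun j _ => sq_nonneg _) hmem
  have hF : q * |lam h jstar| ≤ Fq q h := by
    rw [habs, Fq]
    apply Real.sqrt_le_sqrt
    have h1 : (0:ℝ) ≤ ∑ j ∈ Finset.univ.filter fun j => pw j ≤ 2, (lam h j) ^ 2 :=
      Finset.sum_nonneg fun j _ => sq_nonneg _
    nlinarith [sq_nonneg q]
  refine ⟨hF, ?_⟩
  -- second inequality
  have hodd : (1:ℝ) ≤ |1 - 2 * (m : ℝ)| := by
    have : (1:ℤ) ≤ |1 - 2 * m| := Int.one_le_abs (by omega)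
    calc (1:ℝ) = ((1:ℤ):ℝ) := by norm_num
    _ ≤ ((|1 - 2 * m| : ℤ) : ℝ) := by exact_mod_cast this
    _ = |1 - 2 * (m : ℝ)| := by push_cast; rfl
  have hlb : |π| / (2 ^ n : ℝ) ≤ |lam h jstar| := by
    rw [hlam, abs_mul, abs_div, abs_of_pos hN]
    calc |π| / (2 ^ n : ℝ) = |π| / (2 ^ n : ℝ) * 1 := by ring
    _ ≤ |π| / (2 ^ n : ℝ) * |1 - 2 * (m : ℝ)| := by
        apply mul_le_mul_of_nonneg_left hodd (by positivity)
  calc q * π / (2 ^ n : ℝ) ≤ q * |π| / (2 ^ n : ℝ) := by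
        apply div_le_div_of_nonneg_right ?_ hN.le
        exact mul_le_mul_of_nonneg_left (le_abs_self π) hq
  _ = q * (|π| / (2 ^ n : ℝ)) := by ring
  _ ≤ q * |lam h jstar| := mul_le_mul_of_nonneg_left hlb hq
  _ ≤ Fq q h := hF
end
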